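/- Under the same setup, fix θ ∈ (0, π/2) and c ∈ ℝ. If R(Jx, x cos θ + y sin θ, x cos θ + y sin θ, Jx) = c for all unit x,y with g(x,y) = g(x,Jy) = 0, then R(x,Jx,Jx,x) cos²θ + R(Jx,y,y,Jx) sin²θ = c for all such x,y. -/
import Mathlib


open RealInnerProductSpace

theorem schur_step_eq3
    {V : Type*} [NormedAddCommGroup V] [InnerProductSpace ℝ V] [FiniteDimensional ℝ V]
    (hdim : 4 ≤ Module.finrank ℝ V)
    (J : V →ₗ[ℝ] V) (hJ2 : ∀ x, J (J x) = -x) (hJg : ∀ x y, ⟪J x, J y⟫ = ⟪x, y⟫)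
    (R : V →ₗ[ℝ] V →ₗ[ℝ] V →ₗ[ℝ] V →ₗ[ℝ] ℝ)
    (hR1 : ∀ x y z u, R x y z u = - R y x z u)
    (hR2 : ∀ x y z u, R x y z u = - R x y u z)
    (hR3 : ∀ x y z u, R x y z u = R z u x y)
    (hBianchi : ∀ x y z u, R x y z u + R y z x u + R z x y u = 0)
    (θ : ℝ) (hθ : θ ∈ Set.Ioo 0 (Real.pi / 2)) (c : ℝ)
    (hc : ∀ x y : V, ‖x‖ = 1 → ‖y‖ = 1 → ⟪x, y⟫ = 0 → ⟪x, J y⟫ = 0 →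
      R (J x) (Real.cos θ • x + Real.sin θ • y) (Real.cos θ • x + Real.sin θ • y) (J x) = c) :
    ∀ x y : V, ‖x‖ = 1 → ‖y‖ = 1 → ⟪x, y⟫ = 0 → ⟪x, J y⟫ = 0 →
      R x (J x) (J x) x * (Real.cos θ)^2 + R (J x) y y (J x) * (Real.sin θ)^2 = c := by
  intro x y hx hy hxy hxJy
  have h1 := hc x y hx hy hxy hxJy
  have h2 := hc x (-y) hx (by simpa using hy) (by simpa using hxy)
    (by simpa [map_neg] using hxJy)
  simp only [smul_neg, map_add, map_smul, LinearMap.add_apply, LinearMap.smul_apply,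
    map_neg, LinearMap.neg_apply, smul_eq_mul] at h1 h2
  have key : R x (J x) (J x) x = R (J x) x x (J x) := hR3 x (J x) (J x) x
  rw [key]
  nlinarith [h1, h2]
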